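/- The relation ≤' on integer compositions of n, defined by α ≤' β iff there exist set compositions π⃗ ⪯ τ⃗ (SC preorder) with α(π⃗) = α and α(τ⃗) = β, is a partial order. -/

import Mathlib

/-- A function `g : Fin n → Fin n` is *packed* if its set of used colors is a lower set;
packed functions encode exactly the set compositions of `[n]` (the blocks, in order, are the
level sets of `g`). -/
def IsPacked {n : ℕ} (g : Fin n → Fin n) : Prop :=
  ∀ c : Fin n, (∃ i, g i = c) → ∀ d : Fin n, d ≤ c → ∃ i, g i = d

/-- Set compositions of `[n]`, encoded as packed functions. -/
abbrev SetComp (n : ℕ) := {g : Fin n → Fin n // IsPacked g}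

/-- The set of minima `A_π⃗` of `A` in the set composition encoded by `g` is a singleton. -/
def UniqMin {n : ℕ} (g : Fin n → Fin n) (A : Finset (Fin n)) : Prop :=
  ∃! j, j ∈ A ∧ ∀ k ∈ A, g j ≤ g k

/-- The SC preorder: `π ⪯ τ` iff `#A_π⃗ = 1` implies `#A_τ⃗ = 1` for all nonempty `A`. -/
def SCle {n : ℕ} (π τ : SetComp n) : Prop :=
  ∀ A : Finset (Fin n), A.Nonempty → UniqMin π.1 A → UniqMin τ.1 A

/-- The set composition `π⃗` has composition type (ordered list of block sizes) `c`. -/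
def Represents {n : ℕ} (π : SetComp n) (c : Composition n) : Prop :=
  c.length = (Finset.univ.filter fun b : Fin n => ∃ i, π.1 i = b).card ∧
    ∀ j : Fin c.length,
      c.blocksFun j = (Finset.univ.filter fun i : Fin n => (π.1 i : ℕ) = (j : ℕ)).card

/-- The relation `≤'` on integer compositions of `n` induced by the SC preorder. -/
def le' {n : ℕ} (c₁ c₂ : Composition n) : Prop :=
  ∃ π τ : SetComp n, SCle π τ ∧ Represents π c₁ ∧ Represents τ c₂

open Finset

section Helpers

variable {n : ℕ}

/-- Pair characterization of unique minima. -/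
lemma uniqMin_pair {g : Fin n → Fin n} {x y : Fin n} (hxy : x ≠ y) :
    UniqMin g ({x, y} : Finset (Fin n)) ↔ g x ≠ g y := by
  constructor
  · rintro ⟨j, _, hu⟩ hgeq
    have hx : x = j := hu x ⟨by simp, by intro k hk; simp at hk; rcases hk with rfl | rfl <;> simp [hgeq]⟩
    have hy : y = j := hu y ⟨by simp, by intro k hk; simp at hk; rcases hk with rfl | rfl <;> simp [hgeq]⟩
    exact hxy (hx.trans hy.symm)
  · intro hne
    rcases lt_or_gt_of_ne hne with hlt | hlt
    · refine ⟨x, ⟨by simp, ?_⟩, ?_⟩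
      · intro k hk; simp at hk; rcases hk with rfl | rfl
        · exact le_refl _
        · exact le_of_lt hlt
      · rintro j ⟨hj, hmin⟩
        simp at hj; rcases hj with rfl | rfl
        · rfl
        · exact absurd (hmin x (by simp)) (not_le.mpr hlt)
    · refine ⟨y, ⟨by simp, ?_⟩, ?_⟩
      · intro k hk; simp at hk; rcases hk with rfl | rfl
        · exact le_of_lt hlt
        · exact le_refl _
      · rintro j ⟨hj, hmin⟩
        simp at hj; rcases hj with rfl | rfl
        · exact absurd (hmin y (by simp)) (not_le.mpr hlt)
        · rfl

/-- If two packed functions have the same unique-minimum sets, they induce the same partition. -/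
lemma sameBlock {g h : Fin n → Fin n}
    (H : ∀ A : Finset (Fin n), A.Nonempty → (UniqMin g A ↔ UniqMin h A))
    (x y : Fin n) : g x = g y ↔ h x = h y := by
  rcases eq_or_ne x y with rfl | hxy
  · simp
  · have := (H {x, y} ⟨x, by simp⟩)
    rw [uniqMin_pair hxy, uniqMin_pair hxy] at this
    exact not_iff_not.mp this

/-- Order transfer: if `y`'s block has a partner, `g x < g y` implies `h x < h y`. -/
lemma orderTransfer {g h : Fin n → Fin n}
    (H : ∀ A : Finset (Fin n), A.Nonempty → (UniqMin g A ↔ UniqMin h A))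
    {x y y' : Fin n} (hyy' : y ≠ y') (hgy : g y = g y') (hlt : g x < g y) :
    h x < h y := by
  have hA : UniqMin g ({x, y, y'} : Finset (Fin n)) := by
    refine ⟨x, ⟨by simp, ?_⟩, ?_⟩
    · intro k hk; simp at hk
      rcases hk with rfl | rfl | rfl
      · exact le_refl _
      · exact le_of_lt hlt
      · rw [← hgy]; exact le_of_lt hlt
    · rintro j ⟨hj, hmin⟩
      simp at hj
      rcases hj with rfl | rfl | rfl
      · rfl
      · exact absurd (hmin x (by simp)) (not_le.mpr hlt)
      · exact absurd (hmin x (by simp)) (not_le.mpr (hgy ▸ hlt))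
  have hB := (H _ ⟨x, by simp⟩).mp hA
  obtain ⟨j, _, hu⟩ := hB
  by_contra hc
  have hhy : h y = h y' := (sameBlock H y y').mp hgy
  have hxyne : h x ≠ h y := by
    intro he
    exact absurd ((sameBlock H x y).mpr he) (ne_of_lt hlt)
  have hyx : h y ≤ h x := le_of_not_gt (fun hlt' => hc (lt_of_le_of_ne (le_of_lt hlt') hxyne))
  have h1 : y = j := hu y ⟨by simp, by
    intro k hk; simp at hk
    rcases hk with rfl | rfl | rfl
    · exact hyx
    · exact le_refl _
    · exact le_of_eq hhy⟩
  have h2 : y' = j := hu y' ⟨by simp, by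
    intro k hk; simp at hk
    rcases hk with rfl | rfl | rfl
    · exact hhy ▸ hyx
    · exact le_of_eq hhy.symm
    · exact le_refl _⟩
  exact hyy' (h1.trans h2.symm)

/-- Order transfer, second form: if `x`'s block has a partner, `g x < g y` implies `h x < h y`. -/
lemma orderTransfer' {g h : Fin n → Fin n}
    (H : ∀ A : Finset (Fin n), A.Nonempty → (UniqMin g A ↔ UniqMin h A))
    {x x' y : Fin n} (hxx' : x ≠ x') (hgx : g x = g x') (hlt : g x < g y) :
    h x < h y := by
  have hA : ¬ UniqMin g ({x, x', y} : Finset (Fin n)) := by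
    rintro ⟨j, _, hu⟩
    have h1 : x = j := hu x ⟨by simp, by
      intro k hk; simp at hk
      rcases hk with rfl | rfl | rfl
      · exact le_refl _
      · exact le_of_eq hgx
      · exact le_of_lt hlt⟩
    have h2 : x' = j := hu x' ⟨by simp, by
      intro k hk; simp at hk
      rcases hk with rfl | rfl | rfl
      · exact le_of_eq hgx.symm
      · exact le_refl _
      · exact hgx ▸ le_of_lt hlt⟩
    exact hxx' (h1.trans h2.symm)
  have hB : ¬ UniqMin h ({x, x', y} : Finset (Fin n)) := fun hh =>
    hA ((H _ ⟨x, by simp⟩).mpr hh)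
  by_contra hc
  have hhx : h x = h x' := (sameBlock H x x').mp hgx
  have hxyne : h x ≠ h y := by
    intro he
    exact absurd ((sameBlock H x y).mpr he) (ne_of_lt hlt)
  have hyx : h y ≤ h x := le_of_not_gt (fun hlt' => hc (lt_of_le_of_ne (le_of_lt hlt') hxyne))
  apply hB
  refine ⟨y, ⟨by simp, ?_⟩, ?_⟩
  · intro k hk; simp at hk
    rcases hk with rfl | rfl | rfl
    · exact hyx
    · exact hhx ▸ hyx
    · exact le_refl _
  · rintro j ⟨hj, hmin⟩
    simp at hj
    rcases hj with rfl | rfl | rfl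
    · exact absurd (le_antisymm (hmin y (by simp)) hyx) hxyne
    · exact absurd (le_antisymm (hhx ▸ hmin y (by simp)) (hhx ▸ hyx)) (hhx ▸ hxyne)
    · rfl

/-- For a packed function, the used colors are exactly an initial segment. -/
lemma used_iff {g : Fin n → Fin n} (hp : IsPacked g) (b : Fin n) :
    (∃ i, g i = b) ↔ (b : ℕ) < (Finset.univ.filter fun c : Fin n => ∃ i, g i = c).card := by
  constructor
  · intro hb
    have hsub : Finset.Iic b ⊆ Finset.univ.filter fun c : Fin n => ∃ i, g i = c := by
      intro d hd
      simp only [Finset.mem_filter, Finset.mem_univ, true_and]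
      exact hp b hb d (Finset.mem_Iic.mp hd)
    have := Finset.card_le_card hsub
    rwa [Fin.card_Iic, Nat.succ_le_iff] at this
  · intro hb
    by_contra hnb
    have hsub : (Finset.univ.filter fun c : Fin n => ∃ i, g i = c) ⊆ Finset.Iio b := by
      intro c hc
      simp only [Finset.mem_filter, Finset.mem_univ, true_and] at hc
      rw [Finset.mem_Iio]
      by_contra hlt
      exact hnb (hp c hc b (le_of_not_gt hlt))
    have := Finset.card_le_card hsub
    rw [Fin.card_Iio] at this
    omega

/-- Functions with the same fibers use the same number of colors. -/
lemma card_used_eq {g h : Fin n → Fin n}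
    (Hs : ∀ x y, g x = g y ↔ h x = h y) :
    (Finset.univ.filter fun c : Fin n => ∃ i, g i = c).card
      = (Finset.univ.filter fun c : Fin n => ∃ i, h i = c).card := by
  classical
  have key : ∀ b ∈ (Finset.univ.filter fun c : Fin n => ∃ i, g i = c), ∃ i, g i = b :=
    fun b hb => (Finset.mem_filter.mp hb).2
  refine Finset.card_bij (fun b hb => h (key b hb).choose) ?_ ?_ ?_
  · intro b hb
    simp only [Finset.mem_filter, Finset.mem_univ, true_and]
    exact ⟨_, rfl⟩
  · intro b₁ hb₁ b₂ hb₂ he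
    have := (Hs _ _).mpr he
    rw [(key b₁ hb₁).choose_spec, (key b₂ hb₂).choose_spec] at this
    exact this
  · intro b hb
    simp only [Finset.mem_filter, Finset.mem_univ, true_and] at hb
    obtain ⟨x, rfl⟩ := hb
    have hmem : g x ∈ (Finset.univ.filter fun c : Fin n => ∃ i, g i = c) := by
      simp only [Finset.mem_filter, Finset.mem_univ, true_and]; exact ⟨x, rfl⟩
    exact ⟨g x, hmem, (Hs _ _).mp (key _ hmem).choose_spec⟩

lemma used_congr {g h : Fin n → Fin n} (hpg : IsPacked g) (hph : IsPacked h)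
    (H : ∀ A : Finset (Fin n), A.Nonempty → (UniqMin g A ↔ UniqMin h A)) (b : Fin n) :
    (∃ i, g i = b) ↔ (∃ i, h i = b) := by
  rw [used_iff hpg, used_iff hph, card_used_eq (sameBlock H)]

/-- Half of the key lemma: big fibers are preserved in place. -/
lemma fiber_card_eq_of_two_le {g h : Fin n → Fin n}
    (hpg : IsPacked g) (hph : IsPacked h)
    (H : ∀ A : Finset (Fin n), A.Nonempty → (UniqMin g A ↔ UniqMin h A)) {j : Fin n}
    (h2 : 2 ≤ (Finset.univ.filter fun i => g i = j).card) :
    (Finset.univ.filter fun i => h i = j).card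
      = (Finset.univ.filter fun i => g i = j).card := by
  classical
  obtain ⟨y, y', hy, hy', hyy'⟩ := Finset.one_lt_card_iff.mp (lt_of_lt_of_le one_lt_two h2)
  simp only [Finset.mem_filter, Finset.mem_univ, true_and] at hy hy'
  have hgy : g y = g y' := hy.trans hy'.symm
  -- first: h y = j, i.e. (h y : ℕ) = (g y : ℕ)
  have hval : (h y : ℕ) = (g y : ℕ) := by
    apply le_antisymm
    · -- map Iio (h y) into Iio (g y)
      have := Finset.card_le_card_of_injOn
        (f := fun b => if hb : ∃ x, h x = b then g hb.choose else b)
        (s := Finset.Iio (h y)) (t := Finset.Iio (g y)) ?_ ?_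
      · rwa [Fin.card_Iio, Fin.card_Iio] at this
      · intro b hb
        rw [Finset.coe_Iio, Set.mem_Iio] at hb ⊢
        have hused : ∃ x, h x = b := hph (h y) ⟨y, rfl⟩ b (le_of_lt hb)
        dsimp only
        rw [dif_pos hused]
        set x := hused.choose with hx
        have hxb : h x = b := hused.choose_spec
        have hne : g x ≠ g y := by
          intro he
          exact absurd ((sameBlock H x y).mp he) (by rw [hxb]; exact ne_of_lt hb)
        rcases lt_or_gt_of_ne hne with h1 | h1
        · exact h1
        · exfalso
          have := orderTransfer' H hyy' hgy h1
          rw [hxb] at this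
          exact absurd hb (not_lt.mpr (le_of_lt this))
      · intro b₁ hb₁ b₂ hb₂ he
        simp only [Finset.coe_Iio, Set.mem_Iio] at hb₁ hb₂
        have h₁ : ∃ x, h x = b₁ := hph (h y) ⟨y, rfl⟩ b₁ (le_of_lt hb₁)
        have h₂ : ∃ x, h x = b₂ := hph (h y) ⟨y, rfl⟩ b₂ (le_of_lt hb₂)
        dsimp only at he
        rw [dif_pos h₁, dif_pos h₂] at he
        have := (sameBlock H _ _).mp he
        rw [h₁.choose_spec, h₂.choose_spec] at this
        exact this
    · -- map Iio (g y) into Iio (h y)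
      have := Finset.card_le_card_of_injOn
        (f := fun b => if hb : ∃ x, g x = b then h hb.choose else b)
        (s := Finset.Iio (g y)) (t := Finset.Iio (h y)) ?_ ?_
      · rwa [Fin.card_Iio, Fin.card_Iio] at this
      · intro b hb
        rw [Finset.coe_Iio, Set.mem_Iio] at hb ⊢
        have hused : ∃ x, g x = b := hpg (g y) ⟨y, rfl⟩ b (le_of_lt hb)
        dsimp only
        rw [dif_pos hused]
        have hxb : g hused.choose = b := hused.choose_spec
        rw [← hxb] at hb
        exact orderTransfer H hyy' hgy hb
      · intro b₁ hb₁ b₂ hb₂ he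
        simp only [Finset.coe_Iio, Set.mem_Iio] at hb₁ hb₂
        have h₁ : ∃ x, g x = b₁ := hpg (g y) ⟨y, rfl⟩ b₁ (le_of_lt hb₁)
        have h₂ : ∃ x, g x = b₂ := hpg (g y) ⟨y, rfl⟩ b₂ (le_of_lt hb₂)
        dsimp only at he
        rw [dif_pos h₁, dif_pos h₂] at he
        have := (sameBlock H _ _).mpr he
        rw [h₁.choose_spec, h₂.choose_spec] at this
        exact this
  have hhy : h y = j := by
    rw [← hy]; exact Fin.ext hval
  congr 1
  ext i
  simp only [Finset.mem_filter, Finset.mem_univ, true_and]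
  exact ⟨fun hi => by rw [← hy]; exact (sameBlock H i y).mpr (hi.trans hhy.symm),
    fun hi => by rw [← hhy]; exact (sameBlock H i y).mp (hi.trans hy.symm)⟩

/-- KEY: equal unique-minimum collections force equal fiber size sequences. -/
lemma fiber_card_eq {g h : Fin n → Fin n}
    (hpg : IsPacked g) (hph : IsPacked h)
    (H : ∀ A : Finset (Fin n), A.Nonempty → (UniqMin g A ↔ UniqMin h A)) (j : Fin n) :
    (Finset.univ.filter fun i => g i = j).card
      = (Finset.univ.filter fun i => h i = j).card := by
  classical
  have H' : ∀ A : Finset (Fin n), A.Nonempty → (UniqMin h A ↔ UniqMin g A) :=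
    fun A hA => (H A hA).symm
  have hzero : ((Finset.univ.filter fun i => g i = j).card = 0)
      ↔ ((Finset.univ.filter fun i => h i = j).card = 0) := by
    rw [Finset.card_eq_zero, Finset.card_eq_zero, Finset.filter_eq_empty_iff,
      Finset.filter_eq_empty_iff]
    constructor
    · intro hg x _ hx
      rcases (used_congr hpg hph H j).mpr ⟨x, hx⟩ with ⟨i, hi⟩
      exact hg (Finset.mem_univ i) hi
    · intro hh x _ hx
      rcases (used_congr hpg hph H j).mp ⟨x, hx⟩ with ⟨i, hi⟩
      exact hh (Finset.mem_univ i) hi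
  by_cases hg2 : 2 ≤ (Finset.univ.filter fun i => g i = j).card
  · exact (fiber_card_eq_of_two_le hpg hph H hg2).symm
  · by_cases hh2 : 2 ≤ (Finset.univ.filter fun i => h i = j).card
    · exact fiber_card_eq_of_two_le hph hpg H' hh2
    · omega

end Helpers

section Part2

variable {n : ℕ}

/-- Every composition is represented by some set composition. -/
lemma exists_represents (c : Composition n) : ∃ π : SetComp n, Represents π c := by
  classical
  set g : Fin n → Fin n := fun i => Fin.castLE c.length_le (c.index i) with hg
  have husedc : ∀ b : Fin n, (∃ i, g i = b) ↔ (b : ℕ) < c.length := by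
    intro b
    constructor
    · rintro ⟨i, rfl⟩
      exact (c.index i).isLt
    · intro hb
      have hpos : 0 < c.blocksFun ⟨(b : ℕ), hb⟩ := c.one_le_blocksFun _
      refine ⟨c.embedding ⟨(b : ℕ), hb⟩ ⟨0, hpos⟩, ?_⟩
      apply Fin.ext
      show ((Fin.castLE c.length_le (c.index _)) : ℕ) = (b : ℕ)
      rw [Fin.coe_castLE, c.index_embedding]
  have hpacked : IsPacked g := by
    intro col hcol d hd
    exact (husedc d).mpr (lt_of_le_of_lt hd ((husedc col).mp hcol))
  refine ⟨⟨g, hpacked⟩, ?_, ?_⟩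
  · have he : (Finset.univ.filter fun b : Fin n => ∃ i, g i = b)
        = Finset.univ.map (Fin.castLEEmb c.length_le) := by
      ext b
      constructor
      · intro hb
        have hb' := (husedc b).mp (Finset.mem_filter.mp hb).2
        exact Finset.mem_map.mpr ⟨⟨(b : ℕ), hb'⟩, Finset.mem_univ _, by apply Fin.ext; simp⟩
      · intro hb
        obtain ⟨a, -, rfl⟩ := Finset.mem_map.mp hb
        refine Finset.mem_filter.mpr ⟨Finset.mem_univ _, (husedc _).mpr ?_⟩
        simpa using a.isLt
    rw [he, Finset.card_map, Finset.card_univ, Fintype.card_fin]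
  · intro j
    have he : (Finset.univ.filter fun i : Fin n => ((g i : ℕ) = (j : ℕ)))
        = Finset.univ.map ((c.embedding j).toEmbedding) := by
      ext x
      constructor
      · intro hx
        have hx' := (Finset.mem_filter.mp hx).2
        rw [hg] at hx'
        rw [Fin.coe_castLE] at hx'
        have hix : j = c.index x := by
          apply Fin.ext
          exact hx'.symm
        obtain ⟨a, ha⟩ := c.mem_range_embedding_iff'.mpr hix
        exact Finset.mem_map.mpr ⟨a, Finset.mem_univ _, by exact ha⟩
      · intro hx
        obtain ⟨a, -, rfl⟩ := Finset.mem_map.mp hx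
        refine Finset.mem_filter.mpr ⟨Finset.mem_univ _, ?_⟩
        show ((Fin.castLE c.length_le (c.index ((c.embedding j).toEmbedding a))) : ℕ) = (j : ℕ)
        simp only [RelEmbedding.coe_toEmbedding]
        rw [Fin.coe_castLE, c.index_embedding]
    rw [he, Finset.card_map, Finset.card_univ, Fintype.card_fin]

/-- Relabeling a set composition by a permutation. -/
def SetComp.comp (π : SetComp n) (φ : Equiv.Perm (Fin n)) : SetComp n :=
  ⟨π.1 ∘ φ, by
    intro col hcol d hd
    obtain ⟨i, hi⟩ := π.2 col (by obtain ⟨i, hi⟩ := hcol; exact ⟨φ i, hi⟩) d hd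
    exact ⟨φ.symm i, by simp [hi]⟩⟩

lemma uniqMin_comp (g : Fin n → Fin n) (φ : Equiv.Perm (Fin n)) (A : Finset (Fin n)) :
    UniqMin (g ∘ φ) A ↔ UniqMin g (A.image φ) := by
  classical
  refine φ.existsUnique_congr ?_
  intro j
  simp only [Function.comp_apply]
  constructor
  · rintro ⟨hj, hmin⟩
    refine ⟨Finset.mem_image_of_mem _ hj, ?_⟩
    intro k hk
    obtain ⟨k', hk', rfl⟩ := Finset.mem_image.mp hk
    exact hmin k' hk'
  · rintro ⟨hj, hmin⟩
    refine ⟨?_, fun k hk => hmin (φ k) (Finset.mem_image_of_mem _ hk)⟩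
    obtain ⟨j', hj', he⟩ := Finset.mem_image.mp hj
    rwa [← φ.injective he]

lemma scle_comp {π τ : SetComp n} (φ : Equiv.Perm (Fin n)) (h : SCle π τ) :
    SCle (π.comp φ) (τ.comp φ) := by
  intro A hA hU
  rw [show (SetComp.comp τ φ).1 = τ.1 ∘ φ from rfl, uniqMin_comp]
  rw [show (SetComp.comp π φ).1 = π.1 ∘ φ from rfl, uniqMin_comp] at hU
  exact h _ (hA.image φ) hU

lemma card_filter_comp (p : Fin n → Prop) [DecidablePred p] (φ : Equiv.Perm (Fin n)) :
    (Finset.univ.filter fun i => p (φ i)).card = (Finset.univ.filter p).card := by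
  refine Finset.card_bij (fun a _ => φ a) ?_ ?_ ?_
  · intro a ha
    simp only [Finset.mem_filter, Finset.mem_univ, true_and] at ha ⊢
    exact ha
  · intro a _ b _ h
    exact φ.injective h
  · intro b hb
    simp only [Finset.mem_filter, Finset.mem_univ, true_and] at hb
    refine ⟨φ.symm b, ?_, by simp⟩
    simp only [Finset.mem_filter, Finset.mem_univ, true_and, Equiv.apply_symm_apply]
    exact hb

lemma represents_comp {π : SetComp n} {c : Composition n} (φ : Equiv.Perm (Fin n))
    (h : Represents π c) : Represents (π.comp φ) c := by
  classical
  obtain ⟨h1, h2⟩ := h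
  constructor
  · rw [h1]
    congr 1
    ext b
    simp only [Finset.mem_filter, Finset.mem_univ, true_and]
    exact ⟨fun ⟨i, hi⟩ => ⟨φ.symm i, by simp [SetComp.comp, hi]⟩,
      fun ⟨i, hi⟩ => ⟨φ i, hi⟩⟩
  · intro j
    rw [h2 j]
    exact (card_filter_comp (fun i => (π.1 i : ℕ) = (j : ℕ)) φ).symm

lemma exists_perm {π τ : SetComp n} {c : Composition n}
    (h1 : Represents π c) (h2 : Represents τ c) :
    ∃ φ : Equiv.Perm (Fin n), ∀ x, τ.1 (φ x) = π.1 x := by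
  classical
  have hcard : ∀ j : Fin n,
      (Finset.univ.filter fun i => π.1 i = j).card
        = (Finset.univ.filter fun i => τ.1 i = j).card := by
    intro j
    by_cases hj : (j : ℕ) < c.length
    · have e1 : (Finset.univ.filter fun i => π.1 i = j)
          = (Finset.univ.filter fun i : Fin n =>
              (π.1 i : ℕ) = (((⟨(j : ℕ), hj⟩ : Fin c.length)) : ℕ)) := by
        ext i; simp [Fin.ext_iff]
      have e2 : (Finset.univ.filter fun i => τ.1 i = j)
          = (Finset.univ.filter fun i : Fin n =>
              (τ.1 i : ℕ) = (((⟨(j : ℕ), hj⟩ : Fin c.length)) : ℕ)) := by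
        ext i; simp [Fin.ext_iff]
      rw [e1, e2, ← h1.2 ⟨(j : ℕ), hj⟩, ← h2.2 ⟨(j : ℕ), hj⟩]
    · have hπ : ¬ ∃ i, π.1 i = j := fun hu => by
        have := (used_iff π.2 j).mp hu
        rw [← h1.1] at this
        exact hj this
      have hτ : ¬ ∃ i, τ.1 i = j := fun hu => by
        have := (used_iff τ.2 j).mp hu
        rw [← h2.1] at this
        exact hj this
      rw [Finset.filter_eq_empty_iff.mpr (fun i _ hi => hπ ⟨i, hi⟩),
        Finset.filter_eq_empty_iff.mpr (fun i _ hi => hτ ⟨i, hi⟩)]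
  have e : ∀ j : Fin n, {x // π.1 x = j} ≃ {x // τ.1 x = j} := by
    intro j
    apply Fintype.equivOfCardEq
    rw [Fintype.card_subtype, Fintype.card_subtype]
    exact hcard j
  exact ⟨Equiv.ofFiberEquiv e, fun x => Equiv.ofFiberEquiv_map e x⟩

/-- The collection of nonempty unique-minimum sets. -/
noncomputable def UMset (g : Fin n → Fin n) : Finset (Finset (Fin n)) :=
  @Finset.filter _ (fun A => A.Nonempty ∧ UniqMin g A) (Classical.decPred _) Finset.univ

lemma mem_UMset {g : Fin n → Fin n} {A : Finset (Fin n)} :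
    A ∈ UMset g ↔ A.Nonempty ∧ UniqMin g A := by
  have h := @Finset.mem_filter (Finset (Fin n)) (fun A => A.Nonempty ∧ UniqMin g A)
    (Classical.decPred _) Finset.univ A
  unfold UMset
  rw [h]
  simp

lemma card_UMset_comp (g : Fin n → Fin n) (φ : Equiv.Perm (Fin n)) :
    (UMset (g ∘ φ)).card = (UMset g).card := by
  refine Finset.card_bij (fun A _ => A.image φ) ?_ ?_ ?_
  · intro A hA
    rw [mem_UMset] at hA ⊢
    exact ⟨hA.1.image φ, (uniqMin_comp g φ A).mp hA.2⟩
  · intro A _ B _ h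
    exact Finset.image_injective φ.injective h
  · intro B hB
    rw [mem_UMset] at hB
    have hBi : (B.image φ.symm).image φ = B := by
      rw [Finset.image_image]
      simp
    refine ⟨B.image φ.symm, ?_, hBi⟩
    rw [mem_UMset]
    refine ⟨hB.1.image _, ?_⟩
    rw [uniqMin_comp, hBi]
    exact hB.2

lemma UMset_subset {π τ : SetComp n} (h : SCle π τ) : UMset π.1 ⊆ UMset τ.1 := by
  intro A hA
  rw [mem_UMset] at hA ⊢
  exact ⟨hA.1, h A hA.1 hA.2⟩

lemma comp_eq_of_fibers {π τ : SetComp n} {c₁ c₂ : Composition n}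
    (h1 : Represents π c₁) (h2 : Represents τ c₂)
    (hf : ∀ j : Fin n, (Finset.univ.filter fun i => π.1 i = j).card
      = (Finset.univ.filter fun i => τ.1 i = j).card) :
    c₁ = c₂ := by
  classical
  have hused : ∀ b : Fin n, (∃ i, π.1 i = b) ↔ (∃ i, τ.1 i = b) := by
    intro b
    constructor
    · rintro ⟨i, hi⟩
      have hpos : 0 < (Finset.univ.filter fun k => τ.1 k = b).card := by
        rw [← hf b]
        exact Finset.card_pos.mpr ⟨i, Finset.mem_filter.mpr ⟨Finset.mem_univ _, hi⟩⟩
      obtain ⟨k, hk⟩ := Finset.card_pos.mp hpos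
      exact ⟨k, (Finset.mem_filter.mp hk).2⟩
    · rintro ⟨i, hi⟩
      have hpos : 0 < (Finset.univ.filter fun k => π.1 k = b).card := by
        rw [hf b]
        exact Finset.card_pos.mpr ⟨i, Finset.mem_filter.mpr ⟨Finset.mem_univ _, hi⟩⟩
      obtain ⟨k, hk⟩ := Finset.card_pos.mp hpos
      exact ⟨k, (Finset.mem_filter.mp hk).2⟩
  have hlen : c₁.length = c₂.length := by
    rw [h1.1, h2.1]
    congr 1
    ext b
    simp only [Finset.mem_filter, Finset.mem_univ, true_and]
    exact hused b
  apply Composition.ext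
  apply List.ext_getElem hlen
  intro i hi1 hi2
  have hin : i < n := lt_of_lt_of_le hi1 c₁.length_le
  have hb1 : c₁.blocks[i] = c₁.blocksFun ⟨i, hi1⟩ := by
    simp [Composition.blocksFun]
  have hb2 : c₂.blocks[i] = c₂.blocksFun ⟨i, hi2⟩ := by
    simp [Composition.blocksFun]
  rw [hb1, hb2, h1.2 ⟨i, hi1⟩, h2.2 ⟨i, hi2⟩]
  have e1 : (Finset.univ.filter fun k : Fin n => (π.1 k : ℕ) = i)
      = (Finset.univ.filter fun k => π.1 k = (⟨i, hin⟩ : Fin n)) := by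
    ext k; simp [Fin.ext_iff]
  have e2 : (Finset.univ.filter fun k : Fin n => (τ.1 k : ℕ) = i)
      = (Finset.univ.filter fun k => τ.1 k = (⟨i, hin⟩ : Fin n)) := by
    ext k; simp [Fin.ext_iff]
  rw [e1, e2]
  exact hf _

end Part2

/-- The relation `≤'` on integer compositions of `n` is a partial
order. -/
theorem stmt13 (n : ℕ) : IsPartialOrder (Composition n) le' := by
  refine { refl := ?_, trans := ?_, antisymm := ?_ }
  · intro c
    obtain ⟨π, hπ⟩ := exists_represents c
    exact ⟨π, π, fun A _ h => h, hπ, hπ⟩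
  · rintro a b c ⟨π, τ, hπτ, r1, r2⟩ ⟨σ, ρ, hσρ, r3, r4⟩
    obtain ⟨φ, hφ⟩ := exists_perm r2 r3
    have hcomp : (SetComp.comp σ φ).1 = τ.1 := funext hφ
    have h5 : SCle (SetComp.comp σ φ) (SetComp.comp ρ φ) := scle_comp φ hσρ
    have h6 : SCle τ (SetComp.comp ρ φ) := fun A hA hU => h5 A hA (by rwa [hcomp])
    exact ⟨π, SetComp.comp ρ φ, fun A hA hU => h6 A hA (hπτ A hA hU), r1,
      represents_comp φ r4⟩
  · rintro a b ⟨π, τ, hπτ, r1, r2⟩ ⟨σ, ρ, hσρ, r3, r4⟩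
    obtain ⟨φ, hφ⟩ := exists_perm r2 r3
    have hcomp : (SetComp.comp σ φ).1 = τ.1 := funext hφ
    have hρ' : Represents (SetComp.comp ρ φ) a := represents_comp φ r4
    have h5 : SCle (SetComp.comp σ φ) (SetComp.comp ρ φ) := scle_comp φ hσρ
    have hτρ' : SCle τ (SetComp.comp ρ φ) := fun A hA hU => h5 A hA (by rwa [hcomp])
    obtain ⟨χ, hχ⟩ := exists_perm r1 hρ'
    have hcard : (UMset π.1).card = (UMset (SetComp.comp ρ φ).1).card := by
      have hfun : ((SetComp.comp ρ φ).1 ∘ χ) = π.1 := funext hχ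
      rw [← hfun]
      exact card_UMset_comp _ χ
    have hsub1 : UMset π.1 ⊆ UMset τ.1 := UMset_subset hπτ
    have hsub2 : UMset τ.1 ⊆ UMset (SetComp.comp ρ φ).1 := UMset_subset hτρ'
    have heq : UMset π.1 = UMset τ.1 :=
      Finset.eq_of_subset_of_card_le hsub1
        (le_trans (Finset.card_le_card hsub2) (le_of_eq hcard.symm))
    have H : ∀ A : Finset (Fin n), A.Nonempty → (UniqMin π.1 A ↔ UniqMin τ.1 A) := by
      intro A hA
      constructor
      · intro h
        exact hπτ A hA h
      · intro h
        have : A ∈ UMset π.1 := by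
          rw [heq, mem_UMset]
          exact ⟨hA, h⟩
        exact (mem_UMset.mp this).2
    exact comp_eq_of_fibers r1 r2 (fun j => fiber_card_eq π.2 τ.2 H j)
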